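/- Let R be a commutative Noetherian ring and let I and E be injective R-modules. Then the R-module Hom_R(I, E) is flat and cotorsion; that is, Hom_R(I, E) is a flat R-module and Ext^1_R(F, Hom_R(I, E)) = 0 for every flat R-module F. -/

import Mathlib

/-!
STATEMENT 2: Let `R` be a commutative Noetherian ring and `I`, `E` injective `R`-modules.
Then `Hom_R(I, E)` is a flat and cotorsion `R`-module, i.e. it is flat and
`Ext¹_R(F, Hom_R(I,E)) = 0` for every flat `R`-module `F`.

The vanishing of the (Yoneda) group `Ext¹(A, B)` is expressed by the (equivalent)
statement that every short exact sequence `0 → B → E → A → 0` splits.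
-/

universe u

open CategoryTheory Limits

/-- Vanishing of (Yoneda) `Ext¹(A, B)` in an abelian category: every short exact
sequence `0 → B → E → A → 0` splits. -/
def Ext1Vanishes {C : Type*} [Category C] [Abelian C] (A B : C) : Prop :=
  ∀ (E : C) (f : B ⟶ E) (g : E ⟶ A) (w : f ≫ g = 0),
    (ShortComplex.mk f g w).ShortExact → ∃ s : A ⟶ E, s ≫ g = 𝟙 A

/-- An `R`-module `M` is cotorsion if `Ext¹_R(F, M) = 0` for every flat `R`-module `F`. -/
def IsCotorsion (R : Type u) [CommRing R] (M : Type u) [AddCommGroup M] [Module R M] : Prop :=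
  ∀ F : ModuleCat.{u} R, Module.Flat R F → Ext1Vanishes F (ModuleCat.of R M)

section Helpers

open TensorProduct LinearMap

variable {R : Type u} [CommRing R]
variable {I E : Type u} [AddCommGroup I] [Module R I] [AddCommGroup E] [Module R E]

/-- The natural map `A ⊗ Hom(I,E) → Hom(Hom(A,I), E)`. -/
noncomputable def nu (A : Type u) [AddCommGroup A] [Module R A] :
    A ⊗[R] (I →ₗ[R] E) →ₗ[R] ((A →ₗ[R] I) →ₗ[R] E) :=
  TensorProduct.lift ((LinearMap.llcomp R (A →ₗ[R] I) I E).flip ∘ₗ LinearMap.applyₗ)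

@[simp] lemma nu_tmul {A : Type u} [AddCommGroup A] [Module R A] (a : A) (f : I →ₗ[R] E)
    (g : A →ₗ[R] I) : nu A (a ⊗ₜ f) g = f (g a) := rfl

/-- precomposition `Hom(B,I) → Hom(A,I)` -/
noncomputable def hmap {A B : Type u} [AddCommGroup A] [Module R A] [AddCommGroup B] [Module R B]
    (φ : A →ₗ[R] B) : (B →ₗ[R] I) →ₗ[R] (A →ₗ[R] I) := LinearMap.lcomp R I φ

noncomputable def dmap {A B : Type u} [AddCommGroup A] [Module R A] [AddCommGroup B] [Module R B]
    (φ : A →ₗ[R] B) : ((A →ₗ[R] I) →ₗ[R] E) →ₗ[R] ((B →ₗ[R] I) →ₗ[R] E) :=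
  LinearMap.lcomp R E (hmap φ : (B →ₗ[R] I) →ₗ[R] (A →ₗ[R] I))

@[simp] lemma dmap_apply {A B : Type u} [AddCommGroup A] [Module R A] [AddCommGroup B] [Module R B]
    (φ : A →ₗ[R] B) (Φ : (A →ₗ[R] I) →ₗ[R] E) (g : B →ₗ[R] I) :
    dmap φ Φ g = Φ (g ∘ₗ φ) := by simp [dmap, hmap, LinearMap.lcomp_apply']

lemma nu_natural {A B : Type u} [AddCommGroup A] [Module R A] [AddCommGroup B] [Module R B]
    (φ : A →ₗ[R] B) :
    (nu B) ∘ₗ (φ.rTensor (I →ₗ[R] E)) = (dmap φ) ∘ₗ nu A := by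
  apply TensorProduct.ext'
  intro a f
  ext g
  simp [dmap, hmap, LinearMap.lcomp_apply']

section Free
variable (n : ℕ)

/-- `x ↦ (v ↦ v j • x)`, linear in `x`. -/
noncomputable def srj (j : Fin n) : I →ₗ[R] ((Fin n → R) →ₗ[R] I) where
  toFun x := (LinearMap.proj j : (Fin n → R) →ₗ[R] R).smulRight x
  map_add' x y := by ext v; simp [smul_add]
  map_smul' r x := by
    ext v
    simp only [LinearMap.smulRight_apply, LinearMap.proj_apply, RingHom.id_apply,
      LinearMap.smul_apply]
    exact smul_comm _ _ _

@[simp] lemma srj_apply (j : Fin n) (x : I) (v : Fin n → R) :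
    srj n j x v = v j • x := rfl

/-- Inverse of `nu` on finite free modules. -/
noncomputable def kappa : (((Fin n → R) →ₗ[R] I) →ₗ[R] E) →ₗ[R] ((Fin n → R) ⊗[R] (I →ₗ[R] E)) :=
  ∑ j : Fin n, (TensorProduct.mk R (Fin n → R) (I →ₗ[R] E) (Pi.single j 1)) ∘ₗ
    (LinearMap.lcomp R E (srj n j))

lemma single_eq_smul (j : Fin n) (r : R) : Pi.single j r = r • (Pi.single j 1 : Fin n → R) := by
  rw [← Pi.single_smul, smul_eq_mul, mul_one]

lemma nu_kappa (Φ : ((Fin n → R) →ₗ[R] I) →ₗ[R] E) : nu (Fin n → R) (kappa n Φ) = Φ := by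
  ext g
  have hg : ∑ j : Fin n, srj n j (g (Pi.single j 1)) = g := by
    refine LinearMap.ext fun v => ?_
    have hv : (v : Fin n → R) = ∑ j : Fin n, v j • (Pi.single j 1 : Fin n → R) := by
      conv_lhs => rw [← Finset.univ_sum_single v]
      exact Finset.sum_congr rfl fun j _ => single_eq_smul n j (v j)
    conv_rhs => rw [hv]
    simp [map_sum]
  calc nu (Fin n → R) (kappa n Φ) g
      = ∑ j : Fin n, Φ (srj n j (g (Pi.single j 1))) := by
        simp [kappa, map_sum, LinearMap.lcomp_apply]
    _ = Φ g := by rw [← map_sum, hg]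

lemma kappa_nu (t : (Fin n → R) ⊗[R] (I →ₗ[R] E)) : kappa n (nu (Fin n → R) t) = t := by
  have : (kappa n) ∘ₗ (nu (Fin n → R)) = LinearMap.id (R := R)
      (M := (Fin n → R) ⊗[R] (I →ₗ[R] E)) := by
    apply TensorProduct.ext'
    intro a f
    have h1 : ∀ j : Fin n, (nu (Fin n → R) (a ⊗ₜ f)) ∘ₗ (srj n j) = a j • f := by
      intro j; ext x; simp
    calc (kappa n) (nu (Fin n → R) (a ⊗ₜ f))
        = ∑ j : Fin n, (Pi.single j 1 : Fin n → R) ⊗ₜ[R]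
            ((nu (Fin n → R) (a ⊗ₜ f)) ∘ₗ (srj n j)) := by
          simp [kappa, LinearMap.lcomp_apply']
      _ = ∑ j : Fin n, (Pi.single j (a j) : Fin n → R) ⊗ₜ[R] f := by
          refine Finset.sum_congr rfl fun j _ => ?_
          rw [h1 j, single_eq_smul n j (a j), TensorProduct.smul_tmul]
      _ = a ⊗ₜ f := by
          rw [← TensorProduct.sum_tmul, Finset.univ_sum_single]
  exact congrFun (congrArg DFunLike.coe this) t

lemma nu_free_bijective : Function.Bijective (nu (R := R) (I := I) (E := E) (Fin n → R)) :=
  ⟨Function.LeftInverse.injective (kappa_nu n), fun Φ => ⟨kappa n Φ, nu_kappa n Φ⟩⟩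

end Free

/-- `nu` is injective on finitely presented modules (given `E` injective). -/
lemma nu_inj_of_pres (hE : Module.Injective R E) {N : Type u} [AddCommGroup N] [Module R N]
    {m n : ℕ} (p : (Fin m → R) →ₗ[R] (Fin n → R)) (q : (Fin n → R) →ₗ[R] N)
    (hq : Function.Surjective q) (hpq : Function.Exact p q) :
    Function.Injective (nu (R := R) (I := I) (E := E) N) := by
  rw [injective_iff_map_eq_zero]
  intro t ht
  obtain ⟨u, rfl⟩ := LinearMap.rTensor_surjective (I →ₗ[R] E) hq t
  set Φ : ((Fin n → R) →ₗ[R] I) →ₗ[R] E := nu (Fin n → R) u with hΦ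
  have hnat := congrFun (congrArg DFunLike.coe (nu_natural (I := I) (E := E) q)) u
  simp only [LinearMap.comp_apply] at hnat
  rw [hnat] at ht
  -- `Φ` kills the kernel of `hmap p`
  have hker : LinearMap.ker (hmap (I := I) p) ≤ LinearMap.ker Φ := by
    intro g hg
    have hg' : g ∘ₗ p = 0 := by
      simpa [hmap, LinearMap.lcomp_apply'] using hg
    -- factor `g` through `q`
    have hle : LinearMap.ker q ≤ LinearMap.ker g := by
      rw [LinearMap.exact_iff.mp hpq]
      rintro _ ⟨y, rfl⟩
      simpa using congrFun (congrArg DFunLike.coe hg') y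
    set e := LinearMap.quotKerEquivOfSurjective q hq with he
    set h : N →ₗ[R] I := (Submodule.liftQ (LinearMap.ker q) g hle) ∘ₗ
      (e.symm : N →ₗ[R] ((Fin n → R) ⧸ LinearMap.ker q)) with hh
    have hfac : g = h ∘ₗ q := by
      refine LinearMap.ext fun v => ?_
      have : e.symm (q v) = Submodule.Quotient.mk v := by
        rw [LinearEquiv.symm_apply_eq]
        rfl
      simp [hh, this]
    have : Φ g = (dmap (I := I) (E := E) q Φ) h := by
      rw [dmap_apply, hfac]
    rw [LinearMap.mem_ker, this, ht]
    rfl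
  -- extend the induced map on the range of `hmap p` to all of `Hom(R^m, I)`
  set hp := hmap (I := I) p with hhp
  set Φq := Submodule.liftQ (LinearMap.ker hp) Φ hker with hΦq
  set Φ₀ : (LinearMap.range hp) →ₗ[R] E :=
    Φq ∘ₗ ((LinearMap.quotKerEquivRange hp).symm :
      (LinearMap.range hp) →ₗ[R] (((Fin n → R) →ₗ[R] I) ⧸ LinearMap.ker hp)) with hΦ₀
  obtain ⟨Ψ, hΨ⟩ := hE.out (LinearMap.range hp).subtype (Submodule.injective_subtype _) Φ₀
  have hΨp : (dmap (I := I) (E := E) p) Ψ = Φ := by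
    refine LinearMap.ext fun g => ?_
    have hmem : hp g ∈ LinearMap.range hp := ⟨g, rfl⟩
    have h1 : (LinearMap.quotKerEquivRange hp).symm ⟨hp g, hmem⟩ =
        Submodule.Quotient.mk g := by
      rw [LinearEquiv.symm_apply_eq]
      exact (Subtype.ext (LinearMap.quotKerEquivRange_apply_mk hp g)).symm
    have h2 := hΨ ⟨hp g, hmem⟩
    simp only [Submodule.coe_subtype] at h2
    have : dmap (I := I) (E := E) p Ψ g = Ψ (hp g) := rfl
    rw [this, h2, hΦ₀]
    simp [h1, hΦq]
  -- now conclude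
  obtain ⟨w, hw⟩ := (nu_free_bijective (R := R) (I := I) (E := E) m).2 Ψ
  have hnat2 := congrFun (congrArg DFunLike.coe (nu_natural (I := I) (E := E) p)) w
  simp only [LinearMap.comp_apply] at hnat2
  rw [hw] at hnat2
  have hu : LinearMap.rTensor (I →ₗ[R] E) p w = u := by
    apply (nu_free_bijective (R := R) (I := I) (E := E) n).1
    rw [hnat2, hΨp]
  have hqp : q ∘ₗ p = 0 := LinearMap.ext fun x => hpq.apply_apply_eq_zero x
  rw [← hu, ← LinearMap.comp_apply, ← LinearMap.rTensor_comp, hqp, LinearMap.rTensor_zero]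
  rfl

/-- Every finitely generated module over a Noetherian ring admits a finite presentation. -/
lemma exists_fin_pres (N : Type u) [AddCommGroup N] [Module R N] [Module.Finite R N]
    [IsNoetherianRing R] :
    ∃ (m n : ℕ) (p : (Fin m → R) →ₗ[R] (Fin n → R)) (q : (Fin n → R) →ₗ[R] N),
      Function.Surjective q ∧ Function.Exact p q := by
  obtain ⟨n, v, hv⟩ := Module.Finite.exists_fin (R := R) (M := N)
  set q := Fintype.linearCombination R v with hq
  have hqsurj : Function.Surjective q := by
    rw [← LinearMap.range_eq_top, Fintype.range_linearCombination, hv]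
  set K := LinearMap.ker q with hK
  haveI : Module.Finite R K := Module.Finite.iff_fg.mpr (IsNoetherian.noetherian K)
  obtain ⟨m, w, hw⟩ := Module.Finite.exists_fin (R := R) (M := K)
  set p0 := Fintype.linearCombination R w with hp0
  have hp0surj : LinearMap.range p0 = ⊤ := by
    rw [Fintype.range_linearCombination, hw]
  refine ⟨m, n, K.subtype ∘ₗ p0, q, hqsurj, ?_⟩
  rw [LinearMap.exact_iff, LinearMap.range_comp, hp0surj, Submodule.map_top,
    Submodule.range_subtype]

lemma nu_inj_of_finite (hE : Module.Injective R E) (N : Type u) [AddCommGroup N] [Module R N]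
    [Module.Finite R N] [IsNoetherianRing R] :
    Function.Injective (nu (R := R) (I := I) (E := E) N) := by
  obtain ⟨m, n, p, q, hq, hpq⟩ := exists_fin_pres (R := R) N
  exact nu_inj_of_pres hE p q hq hpq

theorem flat_hom [IsNoetherianRing R] (hI : Module.Injective R I) (hE : Module.Injective R E) :
    Module.Flat R (I →ₗ[R] E) := by
  rw [Module.Flat.iff_rTensor_injective']
  intro J
  haveI : Module.Finite R J := Module.Finite.iff_fg.mpr (IsNoetherian.noetherian J)
  have hJ := nu_inj_of_finite (I := I) hE ↥J
  have hR := nu_inj_of_finite (I := I) hE R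
  have hmapsurj : Function.Surjective (hmap (I := I) J.subtype) := by
    intro g
    obtain ⟨h, hh⟩ := hI.out J.subtype J.injective_subtype g
    exact ⟨h, LinearMap.ext fun x => by simpa [hmap, LinearMap.lcomp_apply] using hh x⟩
  have hdinj : Function.Injective (dmap (I := I) (E := E) J.subtype) := by
    intro Φ₁ Φ₂ h12
    refine LinearMap.ext fun g => ?_
    obtain ⟨h, rfl⟩ := hmapsurj g
    have e1 : Φ₁ (hmap (I := I) J.subtype h) = dmap (I := I) (E := E) J.subtype Φ₁ h := rfl
    have e2 : Φ₂ (hmap (I := I) J.subtype h) = dmap (I := I) (E := E) J.subtype Φ₂ h := rfl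
    rw [e1, e2, h12]
  have hcomp := nu_natural (I := I) (E := E) (J.subtype)
  intro a b hab
  have key : ∀ t : (↥J) ⊗[R] (I →ₗ[R] E),
      (dmap (I := I) (E := E) J.subtype) (nu ↥J t) =
        nu R (LinearMap.rTensor (I →ₗ[R] E) J.subtype t) :=
    fun t => (congrFun (congrArg DFunLike.coe hcomp) t).symm
  apply hJ
  apply hdinj
  rw [key, key, hab]

/-- Diagram chase: given a free(flat) cover of `M`, tensoring the flat-cokernel injection
`f` with `M` is injective. -/
lemma rTensor_injective_aux {B X F : Type u} [AddCommGroup B] [Module R B]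
    [AddCommGroup X] [Module R X] [AddCommGroup F] [Module R F] [Module.Flat R F]
    (f : B →ₗ[R] X) (g : X →ₗ[R] F) (hf : Function.Injective f) (hg : Function.Surjective g)
    (hfg : Function.Exact f g) (M : Type u) [AddCommGroup M] [Module R M]
    (P : Type u) [AddCommGroup P] [Module R P] [Module.Flat R P]
    (π : P →ₗ[R] M) (hπsurj : Function.Surjective π) :
    Function.Injective (f.rTensor M) := by
  rw [injective_iff_map_eq_zero]
  intro t ht
  set K := LinearMap.ker π with hK
  set ι : K →ₗ[R] P := K.subtype with hι
  have hιπ : Function.Exact ι π := by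
    rw [LinearMap.exact_iff]
    exact (Submodule.range_subtype K).symm
  -- lift t to B ⊗ P
  obtain ⟨t', rfl⟩ := LinearMap.lTensor_surjective B hπsurj t
  set x' := f.rTensor P t' with hx'
  -- commuting square
  have hsq1 : (π.lTensor X) x' = (f.rTensor M) ((π.lTensor B) t') := by
    rw [hx', ← LinearMap.comp_apply, ← LinearMap.comp_apply,
      LinearMap.lTensor_comp_rTensor, ← LinearMap.rTensor_comp_lTensor]
  rw [← hsq1] at ht
  -- x' comes from X ⊗ K
  obtain ⟨w, hw⟩ := (lTensor_exact (f := ι) (g := π) X hιπ hπsurj) x' |>.mp ht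
  -- push w to F ⊗ K : it vanishes
  have hgf : g ∘ₗ f = 0 := LinearMap.ext fun b => hfg.apply_apply_eq_zero b
  have hFw : (g.rTensor K) w = 0 := by
    apply Module.Flat.lTensor_preserves_injective_linearMap (M := F) ι
      (Submodule.injective_subtype K)
    rw [map_zero, ← LinearMap.comp_apply, LinearMap.lTensor_comp_rTensor,
      ← LinearMap.rTensor_comp_lTensor, LinearMap.comp_apply, hw, hx',
      ← LinearMap.comp_apply, ← LinearMap.rTensor_comp, hgf, LinearMap.rTensor_zero,
      LinearMap.zero_apply]
  -- so w comes from B ⊗ K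
  obtain ⟨v, hv⟩ := (rTensor_exact (f := f) (g := g) (↥K) hfg hg) w |>.mp hFw
  -- t' = (lTensor B ι) v by injectivity of f ⊗ P
  have hPinj : Function.Injective (f.rTensor P) :=
    Module.Flat.rTensor_preserves_injective_linearMap f hf
  have ht' : t' = (ι.lTensor B) v := by
    apply hPinj
    have hcsq : (f.rTensor P) ((ι.lTensor B) v) = (ι.lTensor X) ((f.rTensor ↥K) v) := by
      rw [← LinearMap.comp_apply, ← LinearMap.comp_apply, LinearMap.rTensor_comp_lTensor,
        ← LinearMap.lTensor_comp_rTensor]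
    rw [hcsq, hv, hw]
  -- conclude
  have hπι : π ∘ₗ ι = 0 := LinearMap.ext fun x => x.2
  rw [ht', ← LinearMap.comp_apply, ← LinearMap.lTensor_comp, hπι, LinearMap.lTensor_zero,
    LinearMap.zero_apply]

/-- A short exact sequence with flat cokernel is pure: tensoring the injection stays injective. -/
lemma rTensor_injective_of_flat_cokernel {B X F : Type u} [AddCommGroup B] [Module R B]
    [AddCommGroup X] [Module R X] [AddCommGroup F] [Module R F] [Module.Flat R F]
    (f : B →ₗ[R] X) (g : X →ₗ[R] F) (hf : Function.Injective f) (hg : Function.Surjective g)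
    (hfg : Function.Exact f g) (M : Type u) [AddCommGroup M] [Module R M] :
    Function.Injective (f.rTensor M) := by
  refine rTensor_injective_aux f g hf hg hfg M (M →₀ R)
    (Finsupp.linearCombination R _root_.id) ?_
  rw [← LinearMap.range_eq_top, Finsupp.range_linearCombination]
  simp

open CategoryTheory Limits

theorem test_cotorsion (R : Type u) [CommRing R] [IsNoetherianRing R]
    (I E : Type u) [AddCommGroup I] [Module R I] [AddCommGroup E] [Module R E]
    (hI : Module.Injective R I) (hE : Module.Injective R E)
    (F : ModuleCat.{u} R) (hF : Module.Flat R F) (X : ModuleCat.{u} R)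
    (f : ModuleCat.of R (I →ₗ[R] E) ⟶ X) (g : X ⟶ F) (w : f ≫ g = 0)
    (hse : (ShortComplex.mk f g w).ShortExact) : ∃ s : F ⟶ X, s ≫ g = 𝟙 F := by
  haveI := hF
  have hfInj : Function.Injective f := hse.moduleCat_injective_f
  have hgSurj : Function.Surjective g := hse.moduleCat_surjective_g
  have hexact : Function.Exact f g :=
    (ShortComplex.ShortExact.moduleCat_exact_iff_function_exact
      (ShortComplex.mk f g w)).mp hse.exact
  have hpure : Function.Injective
      ((f.hom : (I →ₗ[R] E) →ₗ[R] X).rTensor I) :=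
    rTensor_injective_of_flat_cokernel (f.hom : (I →ₗ[R] E) →ₗ[R] X) g.hom hfInj hgSurj hexact I
  set ev : ((I →ₗ[R] E) ⊗[R] I) →ₗ[R] E := TensorProduct.lift LinearMap.id with hev
  obtain ⟨ψ, hψ⟩ := hE.out _ hpure ev
  set r : X →ₗ[R] (I →ₗ[R] E) := TensorProduct.curry ψ with hrdef
  have hr : ∀ b : (I →ₗ[R] E), r (f b) = b := by
    intro b
    ext i
    have h1 : r (f b) i = ψ ((f b) ⊗ₜ i) := rfl
    have h2 : (f b : X) ⊗ₜ[R] i =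
        ((f.hom : (I →ₗ[R] E) →ₗ[R] X).rTensor I) (b ⊗ₜ i) := rfl
    rw [h1, h2, hψ]
    rfl
  have hfr : f ≫ (ModuleCat.ofHom r : X ⟶ ModuleCat.of R (I →ₗ[R] E)) = 𝟙 _ :=
    ModuleCat.hom_ext (LinearMap.ext fun b => hr b)
  let sp := ShortComplex.Splitting.ofExactOfRetraction (ShortComplex.mk f g w)
    hse.exact (ModuleCat.ofHom r) hfr hse.epi_g
  exact ⟨sp.s, sp.s_g⟩

end Helpers

theorem flat_and_cotorsion_hom_of_injectives (R : Type u) [CommRing R] [IsNoetherianRing R]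
    (I E : Type u) [AddCommGroup I] [Module R I] [AddCommGroup E] [Module R E]
    (hI : Module.Injective R I) (hE : Module.Injective R E) :
    Module.Flat R (I →ₗ[R] E) ∧ IsCotorsion R (I →ₗ[R] E) := by
  refine ⟨flat_hom hI hE, ?_⟩
  intro F hF X f g w hse
  exact test_cotorsion R I E hI hE F hF X f g w hse
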